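/- (Proposition 1, part (ii).) Suppose ‖D‖ ≤ δ for a known δ > 0, and suppose there exist ε₁ ∈ ℝ, ε₂ ∈ ℝ, Y ∈ ℝ^{n×T}, and P = Pᵀ ∈ ℝ^{n×n} such that the block matrix [[−P, 0, Y U_{0,T}ᵀ, Y X_{1,T}ᵀ, −δ Y V_{0,T}ᵀ], [0, −ε₁P, 0, 0, δε₁P], [U_{0,T} Yᵀ, 0, −ε₁I, 0, 0], [X_{1,T} Yᵀ, 0, 0, −P + ε₂I, 0], [−δ V_{0,T} Yᵀ, δε₁P, 0, 0, −ε₂I]] is negative definite and P = X_{0,T} Yᵀ. Set Q := P⁻¹, K := U_{0,T} Yᵀ (X_{0,T} Yᵀ)⁻¹, f(x) := A x + B (K x) + D x (K x), and ℰ_Q := {x ∈ ℝⁿ : xᵀ Q x ≤ 1}. Then the origin is asymptotically stable for the closed-loop system x(t+1) = f(x(t)) and its basin of attraction contains ℰ_Q; that is: (a) for every ε > 0 there exists η > 0 such that every solution with ‖x(0)‖ < η satisfies ‖x(t)‖ < ε for all t ≥ 0; (b) every solution with x(0) ∈ ℰ_Q satisfies x(t) ∈ ℰ_Q for all t ≥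 0 and x(t) → 0 as t → ∞. -/

import Mathlib

open Matrix Filter RealInnerProductSpace
open scoped Matrix.Norms.L2Operator Topology

/-- The data-based 5×5 block matrix, with blocks of sizes `[n, n, 1, n, n]`,
`[[−P, 0, Y U₀ᵀ, Y X₁ᵀ, −δ Y V₀ᵀ], [0, −ε₁P, 0, 0, δε₁P], [U₀ Yᵀ, 0, −ε₁I, 0, 0],
[X₁ Yᵀ, 0, 0, −P + ε₂I, 0], [−δ V₀ Yᵀ, δε₁P, 0, 0, −ε₂I]]`. -/
def dataBlockMat5 {n T : ℕ}
    (P : Matrix (Fin n) (Fin n) ℝ) (Y : Matrix (Fin n) (Fin T) ℝ)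
    (U₀ : Matrix (Fin 1) (Fin T) ℝ) (X₁ V₀ : Matrix (Fin n) (Fin T) ℝ)
    (δ ε₁ ε₂ : ℝ) :
    Matrix (((Fin n ⊕ Fin n) ⊕ (Fin 1 ⊕ Fin n)) ⊕ Fin n)
      (((Fin n ⊕ Fin n) ⊕ (Fin 1 ⊕ Fin n)) ⊕ Fin n) ℝ :=
  Matrix.fromBlocks
    (Matrix.fromBlocks
      (Matrix.fromBlocks (-P) 0 0 (-(ε₁ • P)))
      (Matrix.fromBlocks (Y * U₀ᵀ) (Y * X₁ᵀ) 0 0)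
      (Matrix.fromBlocks (U₀ * Yᵀ) 0 (X₁ * Yᵀ) 0)
      (Matrix.fromBlocks (-(ε₁ • (1 : Matrix (Fin 1) (Fin 1) ℝ))) 0 0
        (-P + ε₂ • (1 : Matrix (Fin n) (Fin n) ℝ))))
    (Matrix.fromRows
      (Matrix.fromRows (-(δ • (Y * V₀ᵀ))) ((δ * ε₁) • P))
      (Matrix.fromRows (0 : Matrix (Fin 1) (Fin n) ℝ) (0 : Matrix (Fin n) (Fin n) ℝ)))
    (Matrix.fromCols
      (Matrix.fromCols (-(δ • (V₀ * Yᵀ))) ((δ * ε₁) • P))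
      (Matrix.fromCols (0 : Matrix (Fin n) (Fin 1) ℝ) (0 : Matrix (Fin n) (Fin n) ℝ)))
    (-(ε₂ • (1 : Matrix (Fin n) (Fin n) ℝ)))

private lemma dot_self_nonneg' {n : ℕ} (v : Fin n → ℝ) : 0 ≤ v ⬝ᵥ v :=
  Finset.sum_nonneg fun i _ => mul_self_nonneg _

private lemma dot_le_sqrt {n : ℕ} (u v : Fin n → ℝ) :
    u ⬝ᵥ v ≤ Real.sqrt (u ⬝ᵥ u) * Real.sqrt (v ⬝ᵥ v) := by
  have h1 : ∀ w w' : Fin n → ℝ,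
      (inner ℝ ((WithLp.equiv 2 (Fin n → ℝ)).symm w) ((WithLp.equiv 2 (Fin n → ℝ)).symm w') : ℝ) = w ⬝ᵥ w' := by
    intro w w'
    change w' ⬝ᵥ star w = _
    simp [dotProduct_comm]
  have h2 := real_inner_le_norm ((WithLp.equiv 2 (Fin n → ℝ)).symm u)
    ((WithLp.equiv 2 (Fin n → ℝ)).symm v)
  rw [h1] at h2
  have h3 : ∀ w : Fin n → ℝ, ‖(WithLp.equiv 2 (Fin n → ℝ)).symm w‖ = Real.sqrt (w ⬝ᵥ w) := by
    intro w
    rw [← h1 w w, real_inner_self_eq_norm_mul_norm, Real.sqrt_mul_self (norm_nonneg _)]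
  rw [h3, h3] at h2
  exact h2

private lemma dot_mulVec_bound {n : ℕ} {D : Matrix (Fin n) (Fin n) ℝ} {δ : ℝ}
    (hδ : 0 ≤ δ) (hD : ‖D‖ ≤ δ) (v : Fin n → ℝ) :
    (D *ᵥ v) ⬝ᵥ (D *ᵥ v) ≤ δ ^ 2 * (v ⬝ᵥ v) := by
  have h1 : ∀ w w' : Fin n → ℝ,
      (inner ℝ ((WithLp.equiv 2 (Fin n → ℝ)).symm w) ((WithLp.equiv 2 (Fin n → ℝ)).symm w') : ℝ) = w ⬝ᵥ w' := by
    intro w w'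
    change w' ⬝ᵥ star w = _
    simp [dotProduct_comm]
  have h2 := Matrix.l2_opNorm_mulVec D ((WithLp.equiv 2 (Fin n → ℝ)).symm v)
  have h3 : ∀ w : Fin n → ℝ, ‖(WithLp.equiv 2 (Fin n → ℝ)).symm w‖ ^ 2 = w ⬝ᵥ w := by
    intro w
    rw [← h1 w w, real_inner_self_eq_norm_mul_norm]; ring
  have h4 : ‖(EuclideanSpace.equiv (Fin n) ℝ).symm (D *ᵥ v)‖
      = ‖(WithLp.equiv 2 (Fin n → ℝ)).symm (D *ᵥ v)‖ := rfl
  have h5 : (D *ᵥ ((WithLp.equiv 2 (Fin n → ℝ)).symm v : EuclideanSpace ℝ (Fin n)))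
      = D *ᵥ v := rfl
  rw [h5, h4] at h2
  have hn1 : 0 ≤ ‖(WithLp.equiv 2 (Fin n → ℝ)).symm (D *ᵥ v)‖ := norm_nonneg _
  have hn2 : 0 ≤ ‖(WithLp.equiv 2 (Fin n → ℝ)).symm v‖ := norm_nonneg _
  have hDn : 0 ≤ ‖D‖ := norm_nonneg _
  have h6 : ‖D‖ * ‖(WithLp.equiv 2 (Fin n → ℝ)).symm v‖
      ≤ δ * ‖(WithLp.equiv 2 (Fin n → ℝ)).symm v‖ := mul_le_mul_of_nonneg_right hD hn2
  nlinarith [h3 (D *ᵥ v), h3 v]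
lemma quad_eval {n T : ℕ}
    (P : Matrix (Fin n) (Fin n) ℝ) (Y : Matrix (Fin n) (Fin T) ℝ)
    (U₀ : Matrix (Fin 1) (Fin T) ℝ) (X₁ V₀ : Matrix (Fin n) (Fin T) ℝ)
    (δ ε₁ ε₂ : ℝ) (a b : Fin n → ℝ) (c : Fin 1 → ℝ) (d e : Fin n → ℝ) :
    (Sum.elim (Sum.elim (Sum.elim a b) (Sum.elim c d)) e) ⬝ᵥ
      (dataBlockMat5 P Y U₀ X₁ V₀ δ ε₁ ε₂ *ᵥ
        Sum.elim (Sum.elim (Sum.elim a b) (Sum.elim c d)) e)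
    = -(a ⬝ᵥ P *ᵥ a) - ε₁ * (b ⬝ᵥ P *ᵥ b) - ε₁ * (c ⬝ᵥ c)
      - (d ⬝ᵥ P *ᵥ d) + ε₂ * (d ⬝ᵥ d) - ε₂ * (e ⬝ᵥ e)
      + a ⬝ᵥ ((Y * U₀ᵀ) *ᵥ c) + c ⬝ᵥ ((U₀ * Yᵀ) *ᵥ a)
      + a ⬝ᵥ ((Y * X₁ᵀ) *ᵥ d) + d ⬝ᵥ ((X₁ * Yᵀ) *ᵥ a)
      - δ * (a ⬝ᵥ ((Y * V₀ᵀ) *ᵥ e)) - δ * (e ⬝ᵥ ((V₀ * Yᵀ) *ᵥ a))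
      + δ * ε₁ * (b ⬝ᵥ P *ᵥ e) + δ * ε₁ * (e ⬝ᵥ P *ᵥ b) := by
  simp only [dataBlockMat5, Matrix.fromBlocks_mulVec, Matrix.dotProduct_block,
    Sum.elim_comp_inl, Sum.elim_comp_inr, Matrix.fromRows_mulVec,
    Matrix.fromCols_mulVec_sumElim, Matrix.add_mulVec, Matrix.neg_mulVec,
    Matrix.smul_mulVec, Matrix.zero_mulVec, Matrix.one_mulVec,
    dotProduct_add, dotProduct_neg, dotProduct_smul,
    smul_eq_mul, add_zero, zero_add, neg_zero, dotProduct_zero,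
    Sum.elim_inl, Sum.elim_inr]
  ring

lemma mul_col_entry {n m : ℕ} (M : Matrix (Fin n) (Fin m) ℝ) (y : Matrix (Fin m) (Fin 1) ℝ) :
    (fun i => (M * y) i 0) = M *ᵥ (fun i => y i 0) := by
  ext i
  simp [Matrix.mul_apply, Matrix.mulVec, dotProduct]

lemma entry_quad {n : ℕ} (Q : Matrix (Fin n) (Fin n) ℝ) (y : Matrix (Fin n) (Fin 1) ℝ) :
    (yᵀ * Q * y) 0 0 = (fun i => y i 0) ⬝ᵥ (Q *ᵥ fun i => y i 0) := by
  rw [Matrix.mul_assoc]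
  rw [show (Q * y) = Matrix.of (fun i (_ : Fin 1) => (Q *ᵥ fun j => y j 0) i) by
    ext i j; fin_cases j; exact congrFun (mul_col_entry Q y) i]
  simp [Matrix.mul_apply, dotProduct, Matrix.transpose_apply]

lemma dot_mulVec_symm {n m : ℕ} (M : Matrix (Fin n) (Fin m) ℝ) (u : Fin n → ℝ) (w : Fin m → ℝ) :
    u ⬝ᵥ (M *ᵥ w) = w ⬝ᵥ (Mᵀ *ᵥ u) := by
  rw [Matrix.dotProduct_mulVec, Matrix.mulVec_transpose, dotProduct_comm]

lemma smul_quad {n : ℕ} (Q : Matrix (Fin n) (Fin n) ℝ) (y : Matrix (Fin n) (Fin 1) ℝ) (t : ℝ) :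
    ((t • y)ᵀ * Q * (t • y)) 0 0 = t ^ 2 * ((yᵀ * Q * y) 0 0) := by
  rw [Matrix.transpose_smul, Matrix.smul_mul, Matrix.mul_smul, Matrix.smul_mul]
  simp [smul_smul]
  ring

private lemma bracket_nonneg {dd pp qq δ ε₂ : ℝ} (hε₂ : 0 < ε₂)
    (hdd : dd ≤ δ * Real.sqrt pp * Real.sqrt qq)
    (hpp : 0 ≤ pp) (hqq : 0 ≤ qq) :
    0 ≤ ε₂ * pp - 2 * dd + δ ^ 2 / ε₂ * qq := by
  set p := Real.sqrt pp with hp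
  set q := Real.sqrt qq with hq
  have hp2 : p ^ 2 = pp := Real.sq_sqrt hpp
  have hq2 : q ^ 2 = qq := Real.sq_sqrt hqq
  have key : 0 ≤ (ε₂ * p - δ * q) ^ 2 := sq_nonneg _
  rw [← hp2, ← hq2]
  have hfinal : ε₂ * (ε₂ * p ^ 2 - 2 * dd + δ ^ 2 / ε₂ * q ^ 2)
      = ε₂ ^ 2 * p ^ 2 - 2 * ε₂ * dd + δ ^ 2 * q ^ 2 := by
    field_simp
  have h4 : 0 ≤ ε₂ * (ε₂ * p ^ 2 - 2 * dd + δ ^ 2 / ε₂ * q ^ 2) := by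
    rw [hfinal]
    nlinarith [key, hdd, hε₂]
  have h5 := div_nonneg h4 hε₂.le
  rwa [mul_div_cancel_left₀ _ hε₂.ne'] at h5

lemma key_decrease {n T : ℕ}
    (P Q A D : Matrix (Fin n) (Fin n) ℝ) (B : Matrix (Fin n) (Fin 1) ℝ)
    (K : Matrix (Fin 1) (Fin n) ℝ)
    (Y : Matrix (Fin n) (Fin T) ℝ) (U₀ : Matrix (Fin 1) (Fin T) ℝ)
    (X₁ V₀ : Matrix (Fin n) (Fin T) ℝ) (δ ε₁ ε₂ : ℝ)
    (hδ : 0 ≤ δ) (hD : ‖D‖ ≤ δ) (hε₁ : 0 < ε₁) (hε₂ : 0 < ε₂)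
    (hPsym : P = Pᵀ) (hPQ : P * Q = 1)
    (hblock : (-(dataBlockMat5 P Y U₀ X₁ V₀ δ ε₁ ε₂)).PosDef)
    (hKP : U₀ * Yᵀ = K * P)
    (hXY : X₁ * Yᵀ = A * P + B * (K * P) + D * (V₀ * Yᵀ))
    (f : Matrix (Fin n) (Fin 1) ℝ → Matrix (Fin n) (Fin 1) ℝ)
    (hf : ∀ y, f y = A * y + B * (K * y) + D * y * (K * y))
    (y : Matrix (Fin n) (Fin 1) ℝ) (hy1 : (yᵀ * Q * y) 0 0 ≤ 1) (hy0 : y ≠ 0) :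
    ((f y)ᵀ * Q * (f y)) 0 0 < (yᵀ * Q * y) 0 0 := by
  set yv : Fin n → ℝ := fun i => y i 0 with hyv
  set ξ : Fin n → ℝ := Q *ᵥ yv with hξ
  set w : ℝ := (K *ᵥ yv) 0 with hw
  set Z : Matrix (Fin n) (Fin n) ℝ := V₀ * Yᵀ with hZ
  set xp : Fin n → ℝ := fun i => f y i 0 with hxp
  set Δ : Fin n → ℝ := w • yv - Z *ᵥ ξ with hΔ
  set d : Fin n → ℝ := Q *ᵥ xp with hd
  set e : Fin n → ℝ := (δ / ε₂) • Δ with he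
  set b : Fin n → ℝ := (w / ε₁) • ξ with hb
  set c : Fin 1 → ℝ := fun _ => w / ε₁ with hc
  have hPξ : P *ᵥ ξ = yv := by rw [hξ, Matrix.mulVec_mulVec, hPQ, Matrix.one_mulVec]
  have hPd : P *ᵥ d = xp := by rw [hd, Matrix.mulVec_mulVec, hPQ, Matrix.one_mulVec]
  have hyv0 : yv ≠ 0 := by
    intro h
    apply hy0
    ext i j
    fin_cases j
    exact congrFun h i
  have hξ0 : ξ ≠ 0 := by
    intro h
    apply hyv0
    rw [← hPξ, h, Matrix.mulVec_zero]
  -- closed-loop vector identity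
  have hxp_eq : xp = A *ᵥ yv + B *ᵥ (K *ᵥ yv) + w • (D *ᵥ yv) := by
    funext i
    have h1 := congrFun (mul_col_entry A y) i
    have h2 := congrFun (mul_col_entry D y) i
    have h3 := congrFun (mul_col_entry K y) (0 : Fin 1)
    have h4 : (fun k => (K * y) k 0) = K *ᵥ yv := mul_col_entry K y
    have h5 := congrFun (mul_col_entry B (K * y)) i
    have : (D * y * (K * y)) i 0 = (D * y) i 0 * (K * y) 0 0 := by
      rw [Matrix.mul_apply]
      simp
    have hB : (B * (K * y)) i 0 = (B *ᵥ (K *ᵥ yv)) i := by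
      rw [← h4]; exact h5
    simp only [hxp, hf y, Matrix.add_apply, Pi.add_apply, Pi.smul_apply, smul_eq_mul]
    rw [this, h1, hB, h3, h2, ← hyv, ← hw]
    ring
  have hDΔ : D *ᵥ Δ = w • (D *ᵥ yv) - D *ᵥ (Z *ᵥ ξ) := by
    rw [hΔ, Matrix.mulVec_sub, Matrix.mulVec_smul]
  have hX₁ξ : (X₁ * Yᵀ) *ᵥ ξ = xp - D *ᵥ Δ := by
    rw [hXY, hDΔ, hxp_eq]
    simp only [Matrix.add_mulVec, ← Matrix.mulVec_mulVec]
    rw [hPξ]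
    abel
  have hUξ : (U₀ * Yᵀ) *ᵥ ξ = K *ᵥ yv := by
    rw [hKP, ← Matrix.mulVec_mulVec, hPξ]
  -- value of the quadratic form
  set v : ((Fin n ⊕ Fin n) ⊕ (Fin 1 ⊕ Fin n)) ⊕ Fin n → ℝ :=
    Sum.elim (Sum.elim (Sum.elim ξ b) (Sum.elim c d)) e with hv
  have hv0 : v ≠ 0 := by
    intro h
    apply hξ0
    funext i
    exact congrFun h (Sum.inl (Sum.inl (Sum.inl i)))
  have hSneg : v ⬝ᵥ (dataBlockMat5 P Y U₀ X₁ V₀ δ ε₁ ε₂ *ᵥ v) < 0 := by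
    have := hblock.dotProduct_mulVec_pos hv0
    rw [Matrix.neg_mulVec, dotProduct_neg] at this
    have hstar : star v = v := by
      funext i; exact star_trivial _
    rw [hstar] at this
    linarith
  rw [quad_eval P Y U₀ X₁ V₀ δ ε₁ ε₂ ξ b c d e] at hSneg
  -- the scalar quantities
  set Vx : ℝ := yv ⬝ᵥ ξ with hVx
  set Vp : ℝ := xp ⬝ᵥ d with hVp
  have hVxval : (yᵀ * Q * y) 0 0 = Vx := by
    rw [hVx, hξ]; exact entry_quad Q y
  have hVpval : ((f y)ᵀ * Q * (f y)) 0 0 = Vp := by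
    rw [hVp, hd]; exact entry_quad Q (f y)
  -- simplify each term
  have t1 : ξ ⬝ᵥ P *ᵥ ξ = Vx := by
    rw [hPξ, hVx]; exact dotProduct_comm ξ yv
  have t2 : b ⬝ᵥ P *ᵥ b = (w / ε₁) ^ 2 * Vx := by
    rw [hb, Matrix.mulVec_smul, hPξ, smul_dotProduct, dotProduct_smul, hVx,
      dotProduct_comm ξ yv]
    simp only [smul_eq_mul]
    ring
  have t3 : c ⬝ᵥ c = (w / ε₁) ^ 2 := by
    simp [hc, dotProduct]
    ring
  have t4 : d ⬝ᵥ P *ᵥ d = Vp := by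
    rw [hPd, hVp]; exact dotProduct_comm d xp
  have t5 : e ⬝ᵥ e = (δ / ε₂) ^ 2 * (Δ ⬝ᵥ Δ) := by
    rw [he, smul_dotProduct, dotProduct_smul]
    simp only [smul_eq_mul]; ring
  have t6 : ξ ⬝ᵥ ((Y * U₀ᵀ) *ᵥ c) = (w / ε₁) * w := by
    rw [dot_mulVec_symm, Matrix.transpose_mul, Matrix.transpose_transpose, hUξ]
    simp [hc, dotProduct, hw]
  have t6' : c ⬝ᵥ ((U₀ * Yᵀ) *ᵥ ξ) = (w / ε₁) * w := by
    rw [hUξ]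
    simp [hc, dotProduct, hw]
  have t7 : ξ ⬝ᵥ ((Y * X₁ᵀ) *ᵥ d) = Vp - d ⬝ᵥ (D *ᵥ Δ) := by
    rw [dot_mulVec_symm, Matrix.transpose_mul, Matrix.transpose_transpose, hX₁ξ,
      dotProduct_sub]
    rw [show d ⬝ᵥ xp = Vp by rw [hVp]; exact dotProduct_comm d xp]
  have t7' : d ⬝ᵥ ((X₁ * Yᵀ) *ᵥ ξ) = Vp - d ⬝ᵥ (D *ᵥ Δ) := by
    rw [hX₁ξ, dotProduct_sub,
      show d ⬝ᵥ xp = Vp by rw [hVp]; exact dotProduct_comm d xp]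
  have t8 : ξ ⬝ᵥ ((Y * V₀ᵀ) *ᵥ e) = (δ / ε₂) * (Δ ⬝ᵥ (Z *ᵥ ξ)) := by
    rw [dot_mulVec_symm, Matrix.transpose_mul, Matrix.transpose_transpose, ← hZ, he,
      smul_dotProduct]
    simp only [smul_eq_mul]
  have t8' : e ⬝ᵥ ((V₀ * Yᵀ) *ᵥ ξ) = (δ / ε₂) * (Δ ⬝ᵥ (Z *ᵥ ξ)) := by
    rw [← hZ, he, smul_dotProduct]
    simp only [smul_eq_mul]
  have t9 : b ⬝ᵥ P *ᵥ e = (δ / ε₂) * (w / ε₁) * (Δ ⬝ᵥ yv) := by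
    rw [show b ⬝ᵥ P *ᵥ e = e ⬝ᵥ Pᵀ *ᵥ b from dot_mulVec_symm P b e, ← hPsym, hb,
      Matrix.mulVec_smul, hPξ, he, smul_dotProduct, dotProduct_smul]
    simp only [smul_eq_mul]; ring
  have t9' : e ⬝ᵥ P *ᵥ b = (δ / ε₂) * (w / ε₁) * (Δ ⬝ᵥ yv) := by
    rw [hb, Matrix.mulVec_smul, hPξ, he, smul_dotProduct, dotProduct_smul]
    simp only [smul_eq_mul]; ring
  have hΔΔ : Δ ⬝ᵥ Δ = w * (Δ ⬝ᵥ yv) - Δ ⬝ᵥ (Z *ᵥ ξ) := by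
    nth_rewrite 2 [hΔ]
    rw [dotProduct_sub, dotProduct_smul]
    simp only [smul_eq_mul]
  rw [t1, t2, t3, t4, t5, t6, t6', t7, t7', t8, t8', t9, t9'] at hSneg
  -- the uncertainty bound
  have hbracket : 0 ≤ ε₂ * (d ⬝ᵥ d) - 2 * (d ⬝ᵥ (D *ᵥ Δ)) + δ ^ 2 / ε₂ * (Δ ⬝ᵥ Δ) := by
    have hCS : d ⬝ᵥ (D *ᵥ Δ) ≤ Real.sqrt (d ⬝ᵥ d) * Real.sqrt ((D *ᵥ Δ) ⬝ᵥ (D *ᵥ Δ)) :=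
      dot_le_sqrt d (D *ᵥ Δ)
    have hDb : (D *ᵥ Δ) ⬝ᵥ (D *ᵥ Δ) ≤ δ ^ 2 * (Δ ⬝ᵥ Δ) := dot_mulVec_bound hδ hD Δ
    have hs1 : Real.sqrt ((D *ᵥ Δ) ⬝ᵥ (D *ᵥ Δ)) ≤ δ * Real.sqrt (Δ ⬝ᵥ Δ) := by
      rw [show δ * Real.sqrt (Δ ⬝ᵥ Δ) = Real.sqrt (δ ^ 2 * (Δ ⬝ᵥ Δ)) by
        rw [Real.sqrt_mul (sq_nonneg δ), Real.sqrt_sq hδ]]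
      exact Real.sqrt_le_sqrt hDb
    have hdd : d ⬝ᵥ (D *ᵥ Δ) ≤ δ * Real.sqrt (d ⬝ᵥ d) * Real.sqrt (Δ ⬝ᵥ Δ) := by
      calc d ⬝ᵥ (D *ᵥ Δ) ≤ Real.sqrt (d ⬝ᵥ d) * Real.sqrt ((D *ᵥ Δ) ⬝ᵥ (D *ᵥ Δ)) := hCS
        _ ≤ Real.sqrt (d ⬝ᵥ d) * (δ * Real.sqrt (Δ ⬝ᵥ Δ)) :=
            mul_le_mul_of_nonneg_left hs1 (Real.sqrt_nonneg _)
        _ = δ * Real.sqrt (d ⬝ᵥ d) * Real.sqrt (Δ ⬝ᵥ Δ) := by ring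
    exact bracket_nonneg hε₂ hdd (dot_self_nonneg' d) (dot_self_nonneg' Δ)
  have hVx1 : Vx ≤ 1 := hVxval ▸ hy1
  have hwterm : 0 ≤ w ^ 2 / ε₁ * (1 - Vx) := by
    apply mul_nonneg
    · positivity
    · linarith
  rw [hVxval, hVpval]
  have hexpand : -Vx - ε₁ * ((w / ε₁) ^ 2 * Vx) - ε₁ * (w / ε₁) ^ 2 - Vp + ε₂ * (d ⬝ᵥ d)
      - ε₂ * ((δ / ε₂) ^ 2 * (Δ ⬝ᵥ Δ)) + (w / ε₁) * w + (w / ε₁) * w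
      + (Vp - d ⬝ᵥ (D *ᵥ Δ)) + (Vp - d ⬝ᵥ (D *ᵥ Δ))
      - δ * ((δ / ε₂) * (Δ ⬝ᵥ (Z *ᵥ ξ))) - δ * ((δ / ε₂) * (Δ ⬝ᵥ (Z *ᵥ ξ)))
      + δ * ε₁ * ((δ / ε₂) * (w / ε₁) * (Δ ⬝ᵥ yv)) + δ * ε₁ * ((δ / ε₂) * (w / ε₁) * (Δ ⬝ᵥ yv))
      = (Vp - Vx) + w ^ 2 / ε₁ * (1 - Vx)
        + (ε₂ * (d ⬝ᵥ d) - 2 * (d ⬝ᵥ (D *ᵥ Δ)) + δ ^ 2 / ε₂ * (Δ ⬝ᵥ Δ)) := by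
    rw [hΔΔ]
    field_simp
    ring
  rw [hexpand] at hSneg
  linarith [hSneg, hwterm, hbracket]

/-- Proposition 1, part (ii): the data-based LMI yields a controller such that
the origin is asymptotically stable for the closed loop, with basin of
attraction containing the ellipsoid `ℰ_Q`. -/
theorem data_based_asymptotic_stability {n T : ℕ} (hn : 0 < n) (hT : 0 < T)
    (A : Matrix (Fin n) (Fin n) ℝ) (B : Matrix (Fin n) (Fin 1) ℝ)
    (D : Matrix (Fin n) (Fin n) ℝ)
    (δ : ℝ) (hδ : 0 < δ) (hD : ‖D‖ ≤ δ)
    (u : ℕ → ℝ) (x : ℕ → Matrix (Fin n) (Fin 1) ℝ)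
    (hdyn : ∀ t < T, x (t + 1) = A * x t + u t • B + u t • (D * x t))
    (U₀ : Matrix (Fin 1) (Fin T) ℝ)
    (hU₀ : U₀ = Matrix.of fun (_ : Fin 1) (t : Fin T) => u t)
    (X₀ : Matrix (Fin n) (Fin T) ℝ)
    (hX₀ : X₀ = Matrix.of fun (i : Fin n) (t : Fin T) => x t i 0)
    (X₁ : Matrix (Fin n) (Fin T) ℝ)
    (hX₁ : X₁ = Matrix.of fun (i : Fin n) (t : Fin T) => x (t + 1) i 0)
    (V₀ : Matrix (Fin n) (Fin T) ℝ)
    (hV₀ : V₀ = Matrix.of fun (i : Fin n) (t : Fin T) => x t i 0 * u t)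
    (ε₁ ε₂ : ℝ) (Y : Matrix (Fin n) (Fin T) ℝ)
    (P : Matrix (Fin n) (Fin n) ℝ) (hPsym : P = Pᵀ)
    (hblock : (-(dataBlockMat5 P Y U₀ X₁ V₀ δ ε₁ ε₂)).PosDef)
    (hP : P = X₀ * Yᵀ)
    (Q : Matrix (Fin n) (Fin n) ℝ) (hQ : Q = P⁻¹)
    (K : Matrix (Fin 1) (Fin n) ℝ) (hK : K = U₀ * Yᵀ * (X₀ * Yᵀ)⁻¹)
    (f : Matrix (Fin n) (Fin 1) ℝ → Matrix (Fin n) (Fin 1) ℝ)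
    (hf : ∀ y : Matrix (Fin n) (Fin 1) ℝ, f y = A * y + B * (K * y) + D * y * (K * y))
    (E : Set (Matrix (Fin n) (Fin 1) ℝ))
    (hE : E = {y : Matrix (Fin n) (Fin 1) ℝ | (yᵀ * Q * y) 0 0 ≤ 1}) :
    -- (a) Lyapunov stability of the origin for the closed-loop system
    (∀ ε > (0 : ℝ), ∃ η > (0 : ℝ),
      ∀ z : ℕ → Matrix (Fin n) (Fin 1) ℝ, (∀ t : ℕ, z (t + 1) = f (z t)) →
        ‖z 0‖ < η → ∀ t : ℕ, ‖z t‖ < ε) ∧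
    -- (b) every solution starting in ℰ_Q stays in ℰ_Q and converges to the origin
    (∀ z : ℕ → Matrix (Fin n) (Fin 1) ℝ, (∀ t : ℕ, z (t + 1) = f (z t)) →
      z 0 ∈ E → (∀ t : ℕ, z t ∈ E) ∧ Tendsto z atTop (𝓝 0)) := by
  -- notation
  have hfcont : Continuous f := by
    have : Continuous fun y : Matrix (Fin n) (Fin 1) ℝ =>
        A * y + B * (K * y) + D * y * (K * y) :=
      ((continuous_const.matrix_mul continuous_id).add
        (continuous_const.matrix_mul (continuous_const.matrix_mul continuous_id))).add
        ((continuous_const.matrix_mul continuous_id).matrix_mul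
          (continuous_const.matrix_mul continuous_id))
    have hfe : f = fun y => A * y + B * (K * y) + D * y * (K * y) := funext hf
    rw [hfe]; exact this
  -- the strict quadratic form inequality
  have hqlt : ∀ (a b : Fin n → ℝ) (c : Fin 1 → ℝ) (d e : Fin n → ℝ),
      Sum.elim (Sum.elim (Sum.elim a b) (Sum.elim c d)) e ≠ 0 →
      -(a ⬝ᵥ P *ᵥ a) - ε₁ * (b ⬝ᵥ P *ᵥ b) - ε₁ * (c ⬝ᵥ c)
      - (d ⬝ᵥ P *ᵥ d) + ε₂ * (d ⬝ᵥ d) - ε₂ * (e ⬝ᵥ e)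
      + a ⬝ᵥ ((Y * U₀ᵀ) *ᵥ c) + c ⬝ᵥ ((U₀ * Yᵀ) *ᵥ a)
      + a ⬝ᵥ ((Y * X₁ᵀ) *ᵥ d) + d ⬝ᵥ ((X₁ * Yᵀ) *ᵥ a)
      - δ * (a ⬝ᵥ ((Y * V₀ᵀ) *ᵥ e)) - δ * (e ⬝ᵥ ((V₀ * Yᵀ) *ᵥ a))
      + δ * ε₁ * (b ⬝ᵥ P *ᵥ e) + δ * ε₁ * (e ⬝ᵥ P *ᵥ b) < 0 := by
    intro a b c d e hne
    have h := hblock.dotProduct_mulVec_pos hne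
    rw [Matrix.neg_mulVec, dotProduct_neg] at h
    have hstar : star (Sum.elim (Sum.elim (Sum.elim a b) (Sum.elim c d)) e)
        = Sum.elim (Sum.elim (Sum.elim a b) (Sum.elim c d)) e := by
      funext i; exact star_trivial _
    rw [hstar] at h
    have hq := quad_eval P Y U₀ X₁ V₀ δ ε₁ ε₂ a b c d e
    linarith [hq ▸ h]
  -- positivity of the multipliers and of P
  have i0 : Fin n := ⟨0, hn⟩
  have hε₁pos : 0 < ε₁ := by
    have h := hqlt 0 0 (fun _ => 1) 0 0 (by
      intro hcon
      have := congrFun hcon (Sum.inl (Sum.inr (Sum.inl 0)))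
      simp at this)
    simp only [zero_dotProduct, dotProduct_zero, Matrix.mulVec_zero,
      mul_zero, zero_add, add_zero, neg_zero, zero_sub, sub_zero] at h
    have hcc : (fun _ : Fin 1 => (1:ℝ)) ⬝ᵥ (fun _ => 1) = 1 := by
      simp [dotProduct]
    rw [hcc] at h
    linarith
  have hε₂pos : 0 < ε₂ := by
    have h := hqlt 0 0 0 0 (Pi.single i0 1) (by
      intro hcon
      have := congrFun hcon (Sum.inr i0)
      simp [Pi.single_apply] at this)
    simp only [zero_dotProduct, dotProduct_zero, Matrix.mulVec_zero,
      mul_zero, zero_add, add_zero, neg_zero, zero_sub, sub_zero] at h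
    have hee : (Pi.single i0 (1:ℝ)) ⬝ᵥ (Pi.single i0 1) = 1 := by
      rw [single_dotProduct]
      simp
    rw [hee] at h
    linarith
  have hPherm : P.IsHermitian := by
    rw [Matrix.IsHermitian, Matrix.conjTranspose_eq_transpose_of_trivial, ← hPsym]
  have hPpd : P.PosDef := by
    refine Matrix.PosDef.of_dotProduct_mulVec_pos hPherm fun a ha => ?_
    have h := hqlt a 0 0 0 0 (by
      intro hcon
      apply ha
      funext i
      exact congrFun hcon (Sum.inl (Sum.inl (Sum.inl i))))
    simp only [zero_dotProduct, dotProduct_zero, Matrix.mulVec_zero,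
      mul_zero, zero_add, add_zero, neg_zero, zero_sub, sub_zero] at h
    have hstar : star a = a := by funext i; exact star_trivial _
    rw [hstar]
    linarith
  have hPdet : IsUnit P.det := hPpd.det_pos.ne'.isUnit
  have hPQ : P * Q = 1 := by rw [hQ]; exact Matrix.mul_nonsing_inv P hPdet
  have hQP : Q * P = 1 := by rw [hQ]; exact Matrix.nonsing_inv_mul P hPdet
  have hQpd : Q.PosDef := by rw [hQ]; exact hPpd.inv
  -- data-consistency identities
  have hdata : X₁ = A * X₀ + B * U₀ + D * V₀ := by
    ext i t
    have hdyn' := hdyn t t.isLt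
    rw [hX₁, hX₀, hU₀, hV₀]
    simp only [Matrix.of_apply, Matrix.add_apply, Matrix.mul_apply, hdyn',
      Matrix.smul_apply, smul_eq_mul]
    rw [Fin.sum_univ_one, Finset.mul_sum]
    have hsum : ∀ j : Fin n, u ↑t * (D i j * x ↑t j 0) = D i j * (x ↑t j 0 * u ↑t) := by
      intro j; ring
    rw [Finset.sum_congr rfl fun j _ => hsum j]
    ring
  have hKP : U₀ * Yᵀ = K * P := by
    rw [hK, ← hP, Matrix.mul_assoc, Matrix.nonsing_inv_mul P hPdet, Matrix.mul_one]
  have hXY : X₁ * Yᵀ = A * P + B * (K * P) + D * (V₀ * Yᵀ) := by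
    rw [hdata, Matrix.add_mul, Matrix.add_mul, Matrix.mul_assoc, Matrix.mul_assoc,
      Matrix.mul_assoc, ← hP, hKP]
  -- the Lyapunov function
  set L : Matrix (Fin n) (Fin 1) ℝ → ℝ := fun y => (yᵀ * Q * y) 0 0 with hL
  have hLcont : Continuous L := by
    have h1 : Continuous fun y : Matrix (Fin n) (Fin 1) ℝ => yᵀ * Q * y :=
      ((continuous_id.matrix_transpose).matrix_mul continuous_const).matrix_mul continuous_id
    exact h1.matrix_elem 0 0
  have hL0 : L 0 = 0 := by simp [hL]
  have hLpos : ∀ y : Matrix (Fin n) (Fin 1) ℝ, y ≠ 0 → 0 < L y := by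
    intro y hy
    have hyv : (fun i => y i 0) ≠ 0 := by
      intro hcon
      apply hy
      ext i j
      fin_cases j
      exact congrFun hcon i
    have h := hQpd.dotProduct_mulVec_pos hyv
    have hstar : star (fun i => y i 0) = fun i => y i 0 := by
      funext i; exact star_trivial _
    rw [hstar] at h
    calc (0:ℝ) < _ := h
      _ = L y := (entry_quad Q y).symm
  have hLnonneg : ∀ y : Matrix (Fin n) (Fin 1) ℝ, 0 ≤ L y := by
    intro y
    by_cases hy : y = 0
    · rw [hy, hL0]
    · exact (hLpos y hy).le
  have hdec : ∀ y : Matrix (Fin n) (Fin 1) ℝ, L y ≤ 1 → y ≠ 0 → L (f y) < L y := by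
    intro y h1 h2
    exact key_decrease P Q A D B K Y U₀ X₁ V₀ δ ε₁ ε₂ hδ.le hD hε₁pos hε₂pos hPsym hPQ
      hblock hKP hXY f hf y h1 h2
  have hf0 : f 0 = 0 := by rw [hf]; simp
  have hdec' : ∀ y : Matrix (Fin n) (Fin 1) ℝ, L y ≤ 1 → L (f y) ≤ L y := by
    intro y h1
    by_cases hy : y = 0
    · rw [hy, hf0]
    · exact (hdec y h1 hy).le
  -- bounds via the compact unit sphere
  have hsne : (Metric.sphere (0 : Matrix (Fin n) (Fin 1) ℝ) 1).Nonempty := by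
    have : Nontrivial (Matrix (Fin n) (Fin 1) ℝ) := by
      refine ⟨Matrix.of (fun _ _ => 1), 0, ?_⟩
      intro hcon
      have := congrFun (congrFun hcon i0) 0
      simp at this
    exact NormedSpace.sphere_nonempty.mpr zero_le_one
  obtain ⟨y₁, hy₁s, hy₁min⟩ :=
    (isCompact_sphere (0 : Matrix (Fin n) (Fin 1) ℝ) 1).exists_isMinOn hsne
      hLcont.continuousOn
  obtain ⟨y₂, hy₂s, hy₂max⟩ :=
    (isCompact_sphere (0 : Matrix (Fin n) (Fin 1) ℝ) 1).exists_isMaxOn hsne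
      hLcont.continuousOn
  set c₁ : ℝ := L y₁ with hc₁
  set c₂ : ℝ := L y₂ with hc₂
  have hy₁n : ‖y₁‖ = 1 := by simpa using hy₁s
  have hy₂n : ‖y₂‖ = 1 := by simpa using hy₂s
  have hc₁pos : 0 < c₁ := hLpos y₁ (by intro hcon; rw [hcon] at hy₁n; simp at hy₁n)
  have hLsmul : ∀ (t : ℝ) (y : Matrix (Fin n) (Fin 1) ℝ), L (t • y) = t ^ 2 * L y := by
    intro t y
    exact smul_quad Q y t
  have hlow : ∀ y : Matrix (Fin n) (Fin 1) ℝ, c₁ * ‖y‖ ^ 2 ≤ L y := by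
    intro y
    by_cases hy : y = 0
    · rw [hy, hL0]; simp
    · have hyn : (0:ℝ) < ‖y‖ := norm_pos_iff.mpr hy
      have hu : ‖y‖⁻¹ • y ∈ Metric.sphere (0 : Matrix (Fin n) (Fin 1) ℝ) 1 := by
        simp [norm_smul, abs_of_pos (inv_pos.mpr hyn), inv_mul_cancel₀ hyn.ne']
      have h1 : c₁ ≤ L (‖y‖⁻¹ • y) := hy₁min hu
      have h2 : L (‖y‖⁻¹ • y) = (‖y‖⁻¹) ^ 2 * L y := hLsmul _ y
      rw [h2] at h1
      have h3 : ‖y‖ ^ 2 * c₁ ≤ ‖y‖ ^ 2 * ((‖y‖⁻¹) ^ 2 * L y) :=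
        mul_le_mul_of_nonneg_left h1 (by positivity)
      have h4 : ‖y‖ ^ 2 * ((‖y‖⁻¹) ^ 2 * L y) = L y := by
        field_simp
      rw [h4] at h3
      linarith
  have hup : ∀ y : Matrix (Fin n) (Fin 1) ℝ, L y ≤ c₂ * ‖y‖ ^ 2 := by
    intro y
    by_cases hy : y = 0
    · rw [hy, hL0]; simp
    · have hyn : (0:ℝ) < ‖y‖ := norm_pos_iff.mpr hy
      have hu : ‖y‖⁻¹ • y ∈ Metric.sphere (0 : Matrix (Fin n) (Fin 1) ℝ) 1 := by
        simp [norm_smul, abs_of_pos (inv_pos.mpr hyn), inv_mul_cancel₀ hyn.ne']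
      have h1 : L (‖y‖⁻¹ • y) ≤ c₂ := hy₂max hu
      have h2 : L (‖y‖⁻¹ • y) = (‖y‖⁻¹) ^ 2 * L y := hLsmul _ y
      rw [h2] at h1
      have h3 : ‖y‖ ^ 2 * ((‖y‖⁻¹) ^ 2 * L y) ≤ ‖y‖ ^ 2 * c₂ :=
        mul_le_mul_of_nonneg_left h1 (by positivity)
      have h4 : ‖y‖ ^ 2 * ((‖y‖⁻¹) ^ 2 * L y) = L y := by
        field_simp
      rw [h4] at h3
      linarith [h3, mul_comm (‖y‖ ^ 2) c₂]
  have hc₂pos : 0 < c₂ := lt_of_lt_of_le hc₁pos (by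
    have := hup y₁
    rw [hy₁n] at this
    simpa using this)
  constructor
  · -- part (a): Lyapunov stability
    intro ε hε
    set m : ℝ := min 1 (c₁ * ε ^ 2) with hmdef
    have hm : 0 < m := lt_min one_pos (by positivity)
    have hden : (0:ℝ) < c₂ + 1 := by linarith
    refine ⟨Real.sqrt (m / (c₂ + 1)), Real.sqrt_pos.mpr (by positivity), ?_⟩
    intro z hz hz0 t
    have hη2 : Real.sqrt (m / (c₂ + 1)) ^ 2 = m / (c₂ + 1) :=
      Real.sq_sqrt (by positivity)
    have hm0 : L (z 0) < m := by
      have h1 := hup (z 0)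
      have h2 : ‖z 0‖ ^ 2 < m / (c₂ + 1) := by
        have h2a : ‖z 0‖ ^ 2 < Real.sqrt (m / (c₂ + 1)) ^ 2 := by
          have := mul_self_lt_mul_self (norm_nonneg (z 0)) hz0
          simpa [pow_two] using this
        rwa [hη2] at h2a
      have hq : c₂ * (m / (c₂ + 1)) ≤ m := by
        have hfrac : c₂ / (c₂ + 1) ≤ 1 := (div_le_one hden).mpr (by linarith)
        calc c₂ * (m / (c₂ + 1)) = m * (c₂ / (c₂ + 1)) := by ring
          _ ≤ m * 1 := mul_le_mul_of_nonneg_left hfrac hm.le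
          _ = m := mul_one m
      have h3 : c₂ * ‖z 0‖ ^ 2 < m :=
        lt_of_lt_of_le (mul_lt_mul_of_pos_left h2 hc₂pos) hq
      linarith
    have hall : ∀ s : ℕ, L (z s) < m := by
      intro s
      induction s with
      | zero => exact hm0
      | succ k ih =>
          rw [hz k]
          have hk1 : L (z k) ≤ 1 := le_trans ih.le (min_le_left _ _)
          exact lt_of_le_of_lt (hdec' _ hk1) ih
    have h1 := hlow (z t)
    have h2 := hall t
    have h3 : m ≤ c₁ * ε ^ 2 := min_le_right _ _
    have h4 : ‖z t‖ ^ 2 < ε ^ 2 := by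
      have h5 : c₁ * ‖z t‖ ^ 2 < c₁ * ε ^ 2 := by linarith
      exact (mul_lt_mul_iff_right₀ hc₁pos).mp h5
    exact lt_of_pow_lt_pow_left₀ 2 hε.le h4
  · -- part (b): invariance and attractivity of the ellipsoid
    intro z hz hz0E
    have hz0 : L (z 0) ≤ 1 := by
      rw [hE] at hz0E
      exact hz0E
    have hinv : ∀ t : ℕ, L (z t) ≤ 1 := by
      intro t
      induction t with
      | zero => exact hz0
      | succ k ih => rw [hz k]; exact le_trans (hdec' _ ih) ih
    refine ⟨fun t => by rw [hE]; exact hinv t, ?_⟩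
    set v : ℕ → ℝ := fun t => L (z t) with hvdef
    have hstep : ∀ t, v (t + 1) ≤ v t := by
      intro t
      show L (z (t + 1)) ≤ L (z t)
      rw [hz t]
      exact hdec' _ (hinv t)
    have hanti : Antitone v := antitone_nat_of_succ_le hstep
    have hbdd : BddBelow (Set.range v) := ⟨0, by rintro _ ⟨t, rfl⟩; exact hLnonneg _⟩
    have htend : Tendsto v atTop (𝓝 (⨅ t, v t)) := tendsto_atTop_ciInf hanti hbdd
    set ℓ : ℝ := ⨅ t, v t with hℓdef
    have hℓ0 : 0 ≤ ℓ := le_ciInf fun t => hLnonneg _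
    have hℓle : ∀ t, ℓ ≤ v t := fun t => ciInf_le hbdd t
    have hℓzero : ℓ = 0 := by
      by_contra hne
      have hℓpos : 0 < ℓ := hℓ0.lt_of_ne (Ne.symm hne)
      set S : Set (Matrix (Fin n) (Fin 1) ℝ) := {y | ℓ ≤ L y} ∩ {y | L y ≤ 1} with hSdef
      have hSclosed : IsClosed S :=
        (isClosed_le continuous_const hLcont).inter (isClosed_le hLcont continuous_const)
      have hSbdd : Bornology.IsBounded S := by
        apply (Metric.isBounded_closedBall
          (x := (0 : Matrix (Fin n) (Fin 1) ℝ)) (r := Real.sqrt (1 / c₁))).subset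
        intro y hy
        rw [Metric.mem_closedBall, dist_zero_right]
        have h1 : ‖y‖ ^ 2 ≤ 1 / c₁ := by
          rw [le_div_iff₀ hc₁pos]
          have hy2 : L y ≤ 1 := hy.2
          linarith [hlow y, hy2, mul_comm (‖y‖ ^ 2) c₁]
        have h2 : Real.sqrt (‖y‖ ^ 2) ≤ Real.sqrt (1 / c₁) := Real.sqrt_le_sqrt h1
        rwa [Real.sqrt_sq (norm_nonneg y)] at h2
      have hScompact : IsCompact S :=
        Metric.isCompact_of_isClosed_isBounded hSclosed hSbdd
      have hzS : ∀ t, z t ∈ S := fun t => ⟨hℓle t, hinv t⟩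
      have hgcont : Continuous fun y => L (f y) - L y :=
        (hLcont.comp hfcont).sub hLcont
      obtain ⟨y₀, hy₀S, hy₀max⟩ := hScompact.exists_isMaxOn ⟨z 0, hzS 0⟩
        hgcont.continuousOn
      have hy₀ne : y₀ ≠ 0 := by
        intro hcon
        have h0 : ℓ ≤ L y₀ := hy₀S.1
        rw [hcon, hL0] at h0
        linarith
      have hy₀S2 : L y₀ ≤ 1 := hy₀S.2
      have hy₀neg : L (f y₀) - L y₀ < 0 := sub_neg.mpr (hdec y₀ hy₀S2 hy₀ne)
      set μ : ℝ := -(L (f y₀) - L y₀) with hμdef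
      have hμpos : 0 < μ := by simp only [hμdef]; linarith
      have hstep2 : ∀ t, v (t + 1) ≤ v t - μ := by
        intro t
        have h1 : L (f (z t)) - L (z t) ≤ L (f y₀) - L y₀ := hy₀max (hzS t)
        have h2 : v (t + 1) = L (f (z t)) := by
          show L (z (t + 1)) = L (f (z t))
          rw [hz t]
        rw [h2]
        simp only [hμdef]
        have : v t = L (z t) := rfl
        linarith [h1]
      have hlin : ∀ t : ℕ, v t ≤ v 0 - t * μ := by
        intro t
        induction t with
        | zero => simp
        | succ k ih =>
            have := hstep2 k
            push_cast
            push_cast at ih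
            linarith
      obtain ⟨t, ht⟩ := exists_nat_gt (v 0 / μ)
      have h1 := hlin t
      have h2 : v 0 < t * μ := by
        rw [div_lt_iff₀ hμpos] at ht
        linarith
      have h3 : 0 ≤ v t := hLnonneg _
      linarith
    rw [hℓzero] at htend
    rw [tendsto_zero_iff_norm_tendsto_zero]
    have hub : ∀ t, ‖z t‖ ≤ Real.sqrt (v t / c₁) := by
      intro t
      have h1 : ‖z t‖ ^ 2 ≤ v t / c₁ := by
        rw [le_div_iff₀ hc₁pos]
        have hvt : v t = L (z t) := rfl
        linarith [hlow (z t), mul_comm (‖z t‖ ^ 2) c₁, hvt]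
      have h2 := Real.sqrt_le_sqrt h1
      rwa [Real.sqrt_sq (norm_nonneg _)] at h2
    have hsq : Tendsto (fun t => Real.sqrt (v t / c₁)) atTop (𝓝 0) := by
      have h1 : Tendsto (fun t => v t / c₁) atTop (𝓝 0) := by
        have := htend.div_const c₁
        simpa using this
      have h2 : Tendsto Real.sqrt (𝓝 0) (𝓝 0) := by
        have := Real.continuous_sqrt.tendsto 0
        rwa [Real.sqrt_zero] at this
      exact h2.comp h1
    exact squeeze_zero (fun t => norm_nonneg _) hub hsq
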